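/- arXiv:2406.00558 — 3 statements merged into one kernel-verified Lean document; each statement's English description precedes it below -/
import Mathlib

section
/- Let D be a closed, w-convex, proper subset of the round 2-sphere S² of constant curvature 1. Then D is contained in a closed hemisphere: there exists z ∈ S² such that ⟪z, x⟫_ℝ ≤ 0 for all x ∈ D. -/
notation "⟪" x ", " y "⟫_ℝ" => @inner ℝ _ _ x y

/-- The intrinsic (angular) distance on the unit sphere. -/
noncomputable def sphDist (x y : EuclideanSpace ℝ (Fin 3)) : ℝ := Real.arccos ⟪x, y⟫_ℝ

/-- `γ` is a minimizing geodesic segment from `x` to `y` in the round unit 2-sphere. -/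
def IsMinGeodesic (x y : EuclideanSpace ℝ (Fin 3)) (γ : ℝ → EuclideanSpace ℝ (Fin 3)) : Prop :=
  (∀ t ∈ Set.Icc (0 : ℝ) (sphDist x y), γ t ∈ Metric.sphere (0 : EuclideanSpace ℝ (Fin 3)) 1) ∧
  γ 0 = x ∧ γ (sphDist x y) = y ∧
  ∀ s ∈ Set.Icc (0 : ℝ) (sphDist x y), ∀ t ∈ Set.Icc (0 : ℝ) (sphDist x y),
    sphDist (γ s) (γ t) = |s - t|

/-- `D` is w-convex: any two points of `D` are joined by some minimizing geodesic inside `D`. -/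
def WConvex (D : Set (EuclideanSpace ℝ (Fin 3))) : Prop :=
  ∀ x ∈ D, ∀ y ∈ D, ∃ γ : ℝ → EuclideanSpace ℝ (Fin 3),
    IsMinGeodesic x y γ ∧ ∀ t ∈ Set.Icc (0 : ℝ) (sphDist x y), γ t ∈ D

abbrev E3 := EuclideanSpace ℝ (Fin 3)

lemma arccos_anti {x y : ℝ} (h : x ≤ y) : Real.arccos y ≤ Real.arccos x := by
  rw [Real.arccos_eq_pi_div_two_sub_arcsin, Real.arccos_eq_pi_div_two_sub_arcsin]
  have := Real.monotone_arcsin h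
  linarith


lemma key_ineq {α β c N : ℝ} (hα : 0 ≤ α) (hβ : 0 ≤ β) (hcm : -1 ≤ c) (hcM : c ≤ 1)
    (hN : 0 < N) (hN2 : N ^ 2 = α ^ 2 + 2 * (α * β) * c + β ^ 2) : c * N ≤ α + β * c := by
  rcases le_or_gt 0 c with h0c | h0c
  · have h2ab : 0 ≤ 2 * (α * β) * (1 - c) :=
      mul_nonneg (by positivity) (by linarith)
    have hNle : N ≤ α + β := by nlinarith
    nlinarith
  · rcases le_or_gt 0 (α + β * c) with hpos | hneg
    · nlinarith [mul_pos (neg_pos.mpr h0c) hN]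
    · have h1 : 0 ≤ (1 - c ^ 2) * (-(α * (α + 2 * β * c))) := by
        have ha : 0 ≤ 1 - c ^ 2 := by nlinarith
        have hb : 0 ≤ -(α * (α + 2 * β * c)) := by nlinarith
        exact mul_nonneg ha hb
      nlinarith [h1, mul_pos (neg_pos.mpr h0c) hN]

lemma sin_ident {α β c N S : ℝ} (hN : 0 < N) (hS : S ^ 2 = 1 - c ^ 2)
    (hN2 : N ^ 2 = α ^ 2 + 2 * (α * β) * c + β ^ 2) :
    1 - ((α + β * c) / N) ^ 2 = (β * S / N) ^ 2 := by
  have hN' : N ≠ 0 := hN.ne'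
  field_simp
  linear_combination hN2 - β ^ 2 * hS

lemma cos_ident {α β c N S : ℝ} (hN : 0 < N) (hS : S * S = 1 - c ^ 2) :
    (α * c + β) / N = c * ((α + β * c) / N) + S * (β * S / N) := by
  have hN' : N ≠ 0 := hN.ne'
  field_simp
  linear_combination -β * hS

/-- Key geometric lemma: the normalization of a nonnegative combination of two points of a
w-convex subset of the sphere again lies in the subset. -/
lemma normComb_mem {D : Set E3} (hsub : D ⊆ Metric.sphere 0 1) (hconv : WConvex D)
    {x y : E3} (hx : x ∈ D) (hy : y ∈ D) {α β : ℝ} (hα : 0 ≤ α) (hβ : 0 ≤ β)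
    (hw : α • x + β • y ≠ 0) : ‖α • x + β • y‖⁻¹ • (α • x + β • y) ∈ D := by
  have hx1 : ‖x‖ = 1 := mem_sphere_zero_iff_norm.mp (hsub hx)
  have hy1 : ‖y‖ = 1 := mem_sphere_zero_iff_norm.mp (hsub hy)
  obtain ⟨c, hxy⟩ : ∃ c : ℝ, ⟪x, y⟫_ℝ = c := ⟨_, rfl⟩
  have hyx : ⟪y, x⟫_ℝ = c := by rw [real_inner_comm]; exact hxy
  have hc1 : |c| ≤ 1 := by
    have := abs_real_inner_le_norm x y
    rwa [hx1, hy1, one_mul, hxy] at this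
  obtain ⟨hcm, hcM⟩ := abs_le.mp hc1
  obtain ⟨w, hwdef⟩ : ∃ w : E3, w = α • x + β • y := ⟨_, rfl⟩
  rw [← hwdef] at hw ⊢
  obtain ⟨N, hNdef⟩ : ∃ N : ℝ, N = ‖w‖ := ⟨_, rfl⟩
  rw [← hNdef]
  have hN : 0 < N := hNdef ▸ norm_pos_iff.mpr hw
  have hN2 : N ^ 2 = α ^ 2 + 2 * (α * β) * c + β ^ 2 := by
    rw [hNdef, ← real_inner_self_eq_norm_sq, hwdef]
    simp only [inner_add_left, inner_add_right, real_inner_smul_left, real_inner_smul_right]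
    rw [real_inner_self_eq_norm_sq, real_inner_self_eq_norm_sq, hx1, hy1, hyx, hxy]
    ring
  obtain ⟨p, hpdef⟩ : ∃ p : E3, p = N⁻¹ • w := ⟨_, rfl⟩
  rw [← hpdef]
  have hp1 : ‖p‖ = 1 := by
    rw [hpdef, norm_smul, norm_inv, Real.norm_eq_abs, abs_of_pos hN, ← hNdef,
      inv_mul_cancel₀ hN.ne']
  have hxp : ⟪x, p⟫_ℝ = (α + β * c) / N := by
    rw [hpdef, real_inner_smul_right, hwdef, inner_add_right, real_inner_smul_right,
      real_inner_smul_right, real_inner_self_eq_norm_sq, hx1, hxy]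
    field_simp <;> ring
  have hyp : ⟪y, p⟫_ℝ = (α * c + β) / N := by
    rw [hpdef, real_inner_smul_right, hwdef, inner_add_right, real_inner_smul_right,
      real_inner_smul_right, real_inner_self_eq_norm_sq, hy1, hyx]
    field_simp <;> ring
  obtain ⟨d, hddef⟩ : ∃ d : ℝ, d = sphDist x y := ⟨_, rfl⟩
  have hdarc : d = Real.arccos c := by rw [hddef, sphDist, hxy]
  have hd0 : 0 ≤ d := hdarc ▸ Real.arccos_nonneg _
  obtain ⟨s, hsdef⟩ : ∃ s : ℝ, s = Real.arccos ⟪x, p⟫_ℝ := ⟨_, rfl⟩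
  have hxp1 : |⟪x, p⟫_ℝ| ≤ 1 := by
    have := abs_real_inner_le_norm x p
    rwa [hx1, hp1, one_mul] at this
  obtain ⟨hxpm, hxpM⟩ := abs_le.mp hxp1
  have hcs : Real.cos s = ⟪x, p⟫_ℝ := by rw [hsdef]; exact Real.cos_arccos hxpm hxpM
  have hs0 : 0 ≤ s := hsdef ▸ Real.arccos_nonneg _
  -- s ≤ d, i.e. c ≤ ⟪x,p⟫
  have hkey : c * N ≤ α + β * c := key_ineq hα hβ hcm hcM hN hN2
  have hsd : s ≤ d := by
    rw [hsdef, hdarc]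
    apply arccos_anti
    rw [hxp, le_div_iff₀ hN]
    linarith [hkey]
  have hsq : (0:ℝ) ≤ 1 - c ^ 2 := by nlinarith [hcm, hcM]
  have hsin : Real.sin s = β * Real.sqrt (1 - c ^ 2) / N := by
    rw [hsdef, Real.sin_arccos, hxp]
    have h2 : 1 - ((α + β * c) / N) ^ 2 = (β * Real.sqrt (1 - c ^ 2) / N) ^ 2 :=
      sin_ident hN (Real.sq_sqrt hsq) hN2
    rw [h2, Real.sqrt_sq (by positivity)]
  have hcos_d : Real.cos d = c := by rw [hdarc]; exact Real.cos_arccos hcm hcM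
  have hsin_d : Real.sin d = Real.sqrt (1 - c ^ 2) := by rw [hdarc]; exact Real.sin_arccos c
  have hyds : ⟪y, p⟫_ℝ = Real.cos (d - s) := by
    rw [Real.cos_sub, hcos_d, hcs, hxp, hsin, hsin_d, hyp]
    exact cos_ident hN (Real.mul_self_sqrt hsq)
  obtain ⟨γ, ⟨hγS, hγ0, hγd, hγdist⟩, hγD⟩ := hconv x hx y hy
  have hsmem : s ∈ Set.Icc (0:ℝ) (sphDist x y) := ⟨hs0, by rw [← hddef]; exact hsd⟩
  have h0mem : (0:ℝ) ∈ Set.Icc (0:ℝ) (sphDist x y) := ⟨le_rfl, by rw [← hddef]; exact hd0⟩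
  have hdmem : (sphDist x y) ∈ Set.Icc (0:ℝ) (sphDist x y) :=
    ⟨by rw [← hddef]; exact hd0, le_rfl⟩
  have hgD : γ s ∈ D := hγD s hsmem
  have hg1 : ‖γ s‖ = 1 := mem_sphere_zero_iff_norm.mp (hγS s hsmem)
  have hxg1 : |⟪x, γ s⟫_ℝ| ≤ 1 := by
    have := abs_real_inner_le_norm x (γ s)
    rwa [hx1, hg1, one_mul] at this
  have hyg1 : |⟪γ s, y⟫_ℝ| ≤ 1 := by
    have := abs_real_inner_le_norm (γ s) y
    rwa [hy1, hg1, one_mul] at this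
  have hxg : ⟪x, γ s⟫_ℝ = Real.cos s := by
    have h1 := hγdist 0 h0mem s hsmem
    rw [hγ0, zero_sub, abs_neg, abs_of_nonneg hs0] at h1
    have h2 : Real.arccos ⟪x, γ s⟫_ℝ = s := h1
    have h3 := Real.cos_arccos (abs_le.mp hxg1).1 (abs_le.mp hxg1).2
    rw [h2] at h3
    exact h3.symm
  have hyg : ⟪γ s, y⟫_ℝ = Real.cos (d - s) := by
    have h1 := hγdist s hsmem (sphDist x y) hdmem
    rw [hγd, ← hddef, abs_of_nonpos (by linarith), neg_sub] at h1
    have h2 : Real.arccos ⟪γ s, y⟫_ℝ = d - s := h1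
    have h3 := Real.cos_arccos (abs_le.mp hyg1).1 (abs_le.mp hyg1).2
    rw [h2] at h3
    exact h3.symm
  -- orthogonality argument: γ s = p
  have e1 : ⟪x, γ s - p⟫_ℝ = 0 := by
    rw [inner_sub_right, hxg, hcs, sub_self]
  have e2 : ⟪y, γ s - p⟫_ℝ = 0 := by
    rw [inner_sub_right, real_inner_comm (γ s) y, hyg, hyds, sub_self]
  have e3 : ⟪p, γ s - p⟫_ℝ = 0 := by
    have ew : ⟪w, γ s - p⟫_ℝ = 0 := by
      rw [hwdef, inner_add_left, real_inner_smul_left, real_inner_smul_left, e1, e2]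
      ring
    calc ⟪p, γ s - p⟫_ℝ = N⁻¹ * ⟪w, γ s - p⟫_ℝ := by rw [hpdef, real_inner_smul_left]
      _ = 0 := by rw [ew, mul_zero]
  have e4 : ⟪p, γ s⟫_ℝ = 1 := by
    rw [inner_sub_right] at e3
    have hpp : ⟪p, p⟫_ℝ = 1 := by rw [real_inner_self_eq_norm_sq, hp1]; norm_num
    linarith [e3, hpp]
  have hfin : p = γ s := (inner_eq_one_iff_of_norm_eq_one hp1 hg1).mp e4
  rw [hfin]
  exact hgD

/-- The cone over `D` together with the origin. -/
def coneSet (D : Set E3) : Set E3 := {v | v = 0 ∨ (0 < ‖v‖ ∧ ‖v‖⁻¹ • v ∈ D)}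

lemma smul_mem_coneSet {D : Set E3} (hsub : D ⊆ Metric.sphere 0 1) {t : ℝ} {x : E3}
    (ht : 0 ≤ t) (hx : x ∈ D) : t • x ∈ coneSet D := by
  have hx1 : ‖x‖ = 1 := mem_sphere_zero_iff_norm.mp (hsub hx)
  rcases eq_or_lt_of_le ht with h | h
  · left; rw [← h, zero_smul]
  · right
    have hn : ‖t • x‖ = t := by
      rw [norm_smul, Real.norm_eq_abs, abs_of_pos h, hx1, mul_one]
    constructor
    · rw [hn]; exact h
    · rw [hn, smul_smul, inv_mul_cancel₀ h.ne', one_smul]; exact hx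

lemma mem_coneSet_rep {D : Set E3} {u : E3} (hu : u ∈ coneSet D) :
    u = 0 ∨ ∃ t : ℝ, 0 < t ∧ ∃ x ∈ D, u = t • x := by
  rcases hu with h | ⟨h1, h2⟩
  · exact Or.inl h
  · refine Or.inr ⟨‖u‖, h1, ‖u‖⁻¹ • u, h2, ?_⟩
    rw [smul_smul, mul_inv_cancel₀ h1.ne', one_smul]

lemma coneSet_convex {D : Set E3} (hsub : D ⊆ Metric.sphere 0 1) (hconv : WConvex D) :
    Convex ℝ (coneSet D) := by
  have key : ∀ (α β : ℝ) (x y : E3), 0 ≤ α → 0 ≤ β → x ∈ D → y ∈ D →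
      α • x + β • y ∈ coneSet D := by
    intro α β x y hα hβ hx hy
    by_cases h : α • x + β • y = 0
    · left; exact h
    · right
      exact ⟨norm_pos_iff.mpr h, normComb_mem hsub hconv hx hy hα hβ h⟩
  intro u hu v hv a b ha hb _
  rcases mem_coneSet_rep hu with hu0 | ⟨t₁, ht₁, x, hx, hux⟩ <;>
    rcases mem_coneSet_rep hv with hv0 | ⟨t₂, ht₂, y, hy, hvy⟩
  · left; rw [hu0, hv0, smul_zero, smul_zero, add_zero]
  · rw [hu0, smul_zero, zero_add, hvy, smul_smul]
    exact smul_mem_coneSet hsub (mul_nonneg hb ht₂.le) hy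
  · rw [hv0, smul_zero, add_zero, hux, smul_smul]
    exact smul_mem_coneSet hsub (mul_nonneg ha ht₁.le) hx
  · rw [hux, hvy, smul_smul, smul_smul]
    exact key _ _ _ _ (mul_nonneg ha ht₁.le) (mul_nonneg hb ht₂.le) hx hy

lemma coneSet_closed {D : Set E3} (hclosed : IsClosed D) : IsClosed (coneSet D) := by
  rw [← isSeqClosed_iff_isClosed]
  intro f v hf hfv
  by_cases hv : v = 0
  · left; exact hv
  · right
    have hnv : 0 < ‖v‖ := norm_pos_iff.mpr hv
    refine ⟨hnv, ?_⟩
    have htn : Filter.Tendsto (fun n => ‖f n‖) Filter.atTop (nhds ‖v‖) := hfv.norm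
    have hev : ∀ᶠ n in Filter.atTop, 0 < ‖f n‖ := htn.eventually (eventually_gt_nhds hnv)
    have hlim : Filter.Tendsto (fun n => ‖f n‖⁻¹ • f n) Filter.atTop
        (nhds (‖v‖⁻¹ • v)) := (htn.inv₀ hnv.ne').smul hfv
    refine hclosed.mem_of_tendsto hlim ?_
    filter_upwards [hev] with n hn
    rcases hf n with h0 | ⟨_, h2⟩
    · rw [h0] at hn; simp at hn
    · exact h2

/-- A closed w-convex proper subset of the round 2-sphere is contained in a closed hemisphere. -/
theorem stmt_0 (D : Set (EuclideanSpace ℝ (Fin 3)))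
    (hsub : D ⊆ Metric.sphere 0 1)
    (hclosed : IsClosed D)
    (hproper : D ≠ Metric.sphere 0 1)
    (hconv : WConvex D) :
    ∃ z ∈ Metric.sphere (0 : EuclideanSpace ℝ (Fin 3)) 1, ∀ x ∈ D, ⟪z, x⟫_ℝ ≤ 0 := by
  by_cases hTuniv : coneSet D = Set.univ
  · exfalso
    apply hproper
    refine Set.Subset.antisymm hsub fun q hq => ?_
    have hq1 : ‖q‖ = 1 := mem_sphere_zero_iff_norm.mp hq
    have hqT : q ∈ coneSet D := hTuniv ▸ Set.mem_univ q
    rcases hqT with h0 | ⟨_, hqD⟩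
    · rw [h0, norm_zero] at hq1; norm_num at hq1
    · rw [hq1, inv_one, one_smul] at hqD
      exact hqD
  · obtain ⟨pp, hpp⟩ := Set.ne_univ_iff_exists_notMem _ |>.mp hTuniv
    obtain ⟨f, u, hfu, hup⟩ :=
      geometric_hahn_banach_closed_point (coneSet_convex hsub hconv) (coneSet_closed hclosed) hpp
    have h0T : (0 : E3) ∈ coneSet D := Or.inl rfl
    have hu0 : 0 < u := by
      have := hfu 0 h0T
      rwa [map_zero] at this
    have hfD : ∀ x ∈ D, f x ≤ 0 := by
      intro x hx
      by_contra hpos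
      push_neg at hpos
      have ht : (u / f x) • x ∈ coneSet D :=
        smul_mem_coneSet hsub (div_pos hu0 hpos).le hx
      have h2 := hfu _ ht
      rw [map_smul, smul_eq_mul, div_mul_cancel₀ u hpos.ne'] at h2
      exact lt_irrefl u h2
    set v : E3 := (InnerProductSpace.toDual ℝ E3).symm f with hvdef
    have hvf : ∀ w : E3, ⟪v, w⟫_ℝ = f w := fun w => InnerProductSpace.toDual_symm_apply
    have hvne : v ≠ 0 := by
      intro h
      have h1 := hvf pp
      rw [h, inner_zero_left] at h1
      linarith [hup, hu0]
    refine ⟨‖v‖⁻¹ • v, ?_, ?_⟩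
    · rw [mem_sphere_zero_iff_norm]
      exact norm_smul_inv_norm hvne
    · intro x hx
      rw [real_inner_smul_left, hvf]
      have h1 := hfD x hx
      have h2 : (0:ℝ) ≤ ‖v‖⁻¹ := by positivity
      exact mul_nonpos_of_nonneg_of_nonpos h2 h1
end

section
/- Let D be a closed, s-convex, proper subset of the round 2-sphere S² of constant curvature 1. Then D is contained in an open hemisphere: there exists z ∈ S² such that ⟪z, x⟫_ℝ < 0 for all x ∈ D. -/
/-- `D` is s-convex: every minimizing geodesic segment joining two points of `D` lies in `D`. -/
def SConvex (D : Set (EuclideanSpace ℝ (Fin 3))) : Prop :=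
  ∀ x ∈ D, ∀ y ∈ D, ∀ γ : ℝ → EuclideanSpace ℝ (Fin 3),
    IsMinGeodesic x y γ → ∀ t ∈ Set.Icc (0 : ℝ) (sphDist x y), γ t ∈ D

namespace SphereHemi

open Real

abbrev E3 := EuclideanSpace ℝ (Fin 3)

lemma arccos_le_arccos' {x y : ℝ} (h : x ≤ y) : Real.arccos y ≤ Real.arccos x := by
  simp only [Real.arccos]
  have := Real.monotone_arcsin h
  linarith

lemma inner_self_one {x : E3} (hx : ‖x‖ = 1) : ⟪x, x⟫_ℝ = 1 := by
  rw [real_inner_self_eq_norm_sq, hx]; norm_num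

lemma norm_eq_one_of_inner (v : E3) (h : ⟪v, v⟫_ℝ = 1) : ‖v‖ = 1 := by
  have h2 := real_inner_self_eq_norm_sq v
  nlinarith [norm_nonneg v]

lemma gamma_inner (x u : E3) (hx : ‖x‖ = 1) (hu : ‖u‖ = 1) (hxu : ⟪x, u⟫_ℝ = 0) (s t : ℝ) :
    ⟪(Real.cos s • x + Real.sin s • u), (Real.cos t • x + Real.sin t • u)⟫_ℝ
      = Real.cos (s - t) := by
  have hux : ⟪u, x⟫_ℝ = 0 := by rw [real_inner_comm]; exact hxu
  simp only [inner_add_left, inner_add_right, real_inner_smul_left, real_inner_smul_right,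
    inner_self_one hx, inner_self_one hu, hxu, hux, Real.cos_sub]
  ring

lemma gamma_norm (x u : E3) (hx : ‖x‖ = 1) (hu : ‖u‖ = 1) (hxu : ⟪x, u⟫_ℝ = 0) (t : ℝ) :
    ‖Real.cos t • x + Real.sin t • u‖ = 1 := by
  apply norm_eq_one_of_inner
  rw [gamma_inner x u hx hu hxu t t, sub_self, Real.cos_zero]

lemma gamma_inner_base (x u : E3) (hx : ‖x‖ = 1) (hxu : ⟪x, u⟫_ℝ = 0) (t : ℝ) :
    ⟪x, Real.cos t • x + Real.sin t • u⟫_ℝ = Real.cos t := by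
  simp only [inner_add_right, real_inner_smul_right, inner_self_one hx, hxu]
  ring

lemma gamma_geodesic (x u : E3) (hx : ‖x‖ = 1) (hu : ‖u‖ = 1) (hxu : ⟪x, u⟫_ℝ = 0)
    (d : ℝ) (hd0 : 0 ≤ d) (hdπ : d ≤ π) :
    sphDist x (Real.cos d • x + Real.sin d • u) = d ∧
    IsMinGeodesic x (Real.cos d • x + Real.sin d • u)
      (fun t => Real.cos t • x + Real.sin t • u) := by
  have hγ0 : Real.cos 0 • x + Real.sin 0 • u = x := by simp
  have hdist : sphDist x (Real.cos d • x + Real.sin d • u) = d := by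
    unfold sphDist
    rw [gamma_inner_base x u hx hxu d, Real.arccos_cos hd0 hdπ]
  refine ⟨hdist, ?_, hγ0, by rw [hdist], ?_⟩
  · intro t _
    rw [mem_sphere_zero_iff_norm]
    exact gamma_norm x u hx hu hxu t
  · intro s hs t ht
    rw [hdist] at hs ht
    obtain ⟨hs1, hs2⟩ := hs
    obtain ⟨ht1, ht2⟩ := ht
    have habs : |s - t| ≤ π := by
      rw [abs_le]
      constructor <;> linarith
    unfold sphDist
    rw [gamma_inner x u hx hu hxu s t, ← Real.cos_abs,
      Real.arccos_cos (abs_nonneg _) habs]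

lemma exists_orth (x y : E3) (hx : ‖x‖ = 1) (hy : ‖y‖ = 1)
    (h1 : ⟪x, y⟫_ℝ < 1) (h2 : -1 < ⟪x, y⟫_ℝ) :
    ∃ u : E3, ‖u‖ = 1 ∧ ⟪x, u⟫_ℝ = 0 ∧
      y = Real.cos (Real.arccos ⟪x, y⟫_ℝ) • x + Real.sin (Real.arccos ⟪x, y⟫_ℝ) • u := by
  set c := ⟪x, y⟫_ℝ with hc
  have hpos : (0:ℝ) < 1 - c ^ 2 := by nlinarith
  have hs0 : 0 < Real.sqrt (1 - c ^ 2) := Real.sqrt_pos.2 hpos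
  set s := Real.sqrt (1 - c ^ 2) with hsdef
  have hs2 : s ^ 2 = 1 - c ^ 2 := Real.sq_sqrt hpos.le
  have hyx : ⟪y, x⟫_ℝ = c := by rw [real_inner_comm]
  refine ⟨s⁻¹ • (y - c • x), ?_, ?_, ?_⟩
  · have hninner : ⟪y - c • x, y - c • x⟫_ℝ = 1 - c ^ 2 := by
      simp only [inner_sub_left, inner_sub_right, real_inner_smul_left, real_inner_smul_right,
        inner_self_one hx, inner_self_one hy, hyx, ← hc]
      ring
    apply norm_eq_one_of_inner
    rw [real_inner_smul_left, real_inner_smul_right, hninner, ← hs2]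
    field_simp
  · rw [real_inner_smul_right, inner_sub_right, real_inner_smul_right, inner_self_one hx, ← hc]
    ring
  · rw [Real.cos_arccos h2.le h1.le, Real.sin_arccos, ← hsdef,
      smul_smul, mul_inv_cancel₀ hs0.ne', one_smul]
    module

lemma no_antipode (D : Set E3) (hsub : D ⊆ Metric.sphere 0 1)
    (hproper : D ≠ Metric.sphere 0 1) (hconv : SConvex D)
    {x : E3} (hx : x ∈ D) (hx' : -x ∈ D) : False := by
  apply hproper
  refine Set.Subset.antisymm hsub fun y hy => ?_
  have hxn : ‖x‖ = 1 := mem_sphere_zero_iff_norm.1 (hsub hx)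
  have hyn : ‖y‖ = 1 := mem_sphere_zero_iff_norm.1 hy
  by_cases h1 : y = x
  · exact h1 ▸ hx
  by_cases h2 : y = -x
  · exact h2 ▸ hx'
  have hc1 : ⟪x, y⟫_ℝ < 1 := by
    have hle : ⟪x, y⟫_ℝ ≤ 1 := by
      have := real_inner_le_norm x y
      rw [hxn, hyn] at this; linarith
    rcases lt_or_eq_of_le hle with h | h
    · exact h
    · exact absurd ((inner_eq_one_iff_of_norm_eq_one hxn hyn).1 h).symm h1
  have hc2 : -1 < ⟪x, y⟫_ℝ := by
    have hle : ⟪x, -y⟫_ℝ ≤ 1 := by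
      have := real_inner_le_norm x (-y)
      rw [hxn, norm_neg, hyn] at this; linarith
    rcases lt_or_eq_of_le hle with h | h
    · rw [inner_neg_right] at h; linarith
    · have hxy' := (inner_eq_one_iff_of_norm_eq_one hxn (by rw [norm_neg]; exact hyn)).1 h
      exact absurd (by rw [hxy']; simp) h2
  obtain ⟨u, hu, hxu, hyeq⟩ := exists_orth x y hxn hyn hc1 hc2
  obtain ⟨hdist, hgeo⟩ := gamma_geodesic x u hxn hu hxu π Real.pi_pos.le le_rfl
  have hπ : Real.cos π • x + Real.sin π • u = -x := by
    rw [Real.cos_pi, Real.sin_pi]; simp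
  rw [hπ] at hdist hgeo
  have hmem := hconv x hx (-x) hx' _ hgeo (Real.arccos ⟪x, y⟫_ℝ)
    ⟨Real.arccos_nonneg _, by rw [hdist]; exact Real.arccos_le_pi _⟩
  have hmem' : Real.cos (Real.arccos ⟪x, y⟫_ℝ) • x + Real.sin (Real.arccos ⟪x, y⟫_ℝ) • u ∈ D :=
    hmem
  rwa [← hyeq] at hmem'

set_option maxHeartbeats 1000000 in
lemma combine (D : Set E3) (hsub : D ⊆ Metric.sphere 0 1)
    (hproper : D ≠ Metric.sphere 0 1) (hconv : SConvex D)
    {x y : E3} (hx : x ∈ D) (hy : y ∈ D) {a b : ℝ} (ha : 0 < a) (hb : 0 < b) :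
    a • x + b • y ≠ 0 ∧ ‖a • x + b • y‖⁻¹ • (a • x + b • y) ∈ D := by
  have hxn : ‖x‖ = 1 := mem_sphere_zero_iff_norm.1 (hsub hx)
  have hyn : ‖y‖ = 1 := mem_sphere_zero_iff_norm.1 (hsub hy)
  by_cases hxy : y = x
  · subst hxy
    have h1 : a • y + b • y = (a + b) • y := (add_smul a b y).symm
    have hν : ‖a • y + b • y‖ = a + b := by
      rw [h1, norm_smul, hyn, mul_one, Real.norm_eq_abs, abs_of_pos (by linarith)]
    have hne : a • y + b • y ≠ 0 := by
      intro h; rw [h, norm_zero] at hν; linarith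
    refine ⟨hne, ?_⟩
    rw [hν, h1, smul_smul, inv_mul_cancel₀ (by positivity), one_smul]
    exact hy
  · have hc1 : ⟪x, y⟫_ℝ < 1 := by
      have hle : ⟪x, y⟫_ℝ ≤ 1 := by
        have := real_inner_le_norm x y
        rw [hxn, hyn] at this; linarith
      rcases lt_or_eq_of_le hle with h | h
      · exact h
      · exact absurd ((inner_eq_one_iff_of_norm_eq_one hxn hyn).1 h).symm hxy
    have hc2 : -1 < ⟪x, y⟫_ℝ := by
      have hle : ⟪x, -y⟫_ℝ ≤ 1 := by
        have := real_inner_le_norm x (-y)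
        rw [hxn, norm_neg, hyn] at this; linarith
      rcases lt_or_eq_of_le hle with h | h
      · rw [inner_neg_right] at h; linarith
      · have hxy' := (inner_eq_one_iff_of_norm_eq_one hxn (by rw [norm_neg]; exact hyn)).1 h
        exfalso
        exact no_antipode D hsub hproper hconv hx (by rw [hxy', neg_neg]; exact hy)
    obtain ⟨u, hu, hxu, hyeq⟩ := exists_orth x y hxn hyn hc1 hc2
    set c := ⟪x, y⟫_ℝ with hcdef
    set d := Real.arccos c with hddef
    have hd0 : 0 ≤ d := Real.arccos_nonneg _
    have hdπ : d ≤ π := Real.arccos_le_pi _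
    obtain ⟨hdist, hgeo⟩ := gamma_geodesic x u hxn hu hxu d hd0 hdπ
    rw [← hyeq] at hdist hgeo
    have hcos : Real.cos d = c := Real.cos_arccos hc2.le hc1.le
    set s := Real.sin d with hsdef
    have hs0 : 0 < s := by
      rw [hsdef, hddef, Real.sin_arccos]
      exact Real.sqrt_pos.2 (by nlinarith)
    have hs2 : s ^ 2 = 1 - c ^ 2 := by
      rw [hsdef, hddef, Real.sin_arccos, Real.sq_sqrt (by nlinarith)]
    have hveq : a • x + b • y = (a + b * c) • x + (b * s) • u := by
      rw [hyeq, hcos]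
      module
    set N := ‖a • x + b • y‖ with hN
    have hNsq : N ^ 2 = (a + b * c) ^ 2 + (b * s) ^ 2 := by
      rw [hN, ← real_inner_self_eq_norm_sq, hveq]
      have hux : ⟪u, x⟫_ℝ = 0 := by rw [real_inner_comm]; exact hxu
      simp only [inner_add_left, inner_add_right, real_inner_smul_left, real_inner_smul_right,
        inner_self_one hxn, inner_self_one hu, hxu, hux]
      ring
    have hNnn : 0 ≤ N := norm_nonneg _
    have hN0 : 0 < N := by nlinarith [mul_pos hb hs0]
    have hne : a • x + b • y ≠ 0 := by
      intro h; rw [hN, h, norm_zero] at hN0; exact lt_irrefl 0 hN0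
    have hsqle : (a + b * c) ^ 2 ≤ N ^ 2 := by nlinarith [sq_nonneg (b * s)]
    have habs1 : (a + b * c) / N ≤ 1 := by
      rw [div_le_one hN0]; nlinarith
    have habs2 : -1 ≤ (a + b * c) / N := by
      rw [le_div_iff₀ hN0]; nlinarith
    set t := Real.arccos ((a + b * c) / N) with htdef
    have hcost : Real.cos t = (a + b * c) / N := Real.cos_arccos habs2 habs1
    have hsint : Real.sin t = (b * s) / N := by
      rw [htdef, Real.sin_arccos]
      have heq : 1 - ((a + b * c) / N) ^ 2 = ((b * s) / N) ^ 2 := by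
        field_simp
        nlinarith [hNsq]
      rw [heq, Real.sqrt_sq (by positivity)]
    have hkey : c * N ≤ a + b * c := by
      rcases le_or_gt c 0 with hcneg | hcpos
      · rcases le_or_gt 0 (a + b * c) with hpos | hneg
        · nlinarith
        · -- c < 0 and a + b*c < 0
          have hc0 : c < 0 := by nlinarith
          have h1 : (a + b * c) ^ 2 ≤ b ^ 2 * c ^ 2 := by nlinarith
          have h2 : (a + b * c) ^ 2 ≤ c ^ 2 * N ^ 2 := by nlinarith [sq_nonneg c]
          nlinarith [mul_nonneg (neg_nonneg.2 hc0.le) hNnn]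
      · have hNle : N ≤ a + b := by
          have := norm_add_le (a • x) (b • y)
          rw [norm_smul, norm_smul, hxn, hyn, mul_one, mul_one, Real.norm_eq_abs,
            Real.norm_eq_abs, abs_of_pos ha, abs_of_pos hb] at this
          exact this
        nlinarith
    have htd : t ≤ d := by
      rw [htdef, hddef]
      apply arccos_le_arccos'
      rw [le_div_iff₀ hN0]
      exact hkey
    have hmem := hconv x hx y hy _ hgeo t
      ⟨Real.arccos_nonneg _, by rw [hdist]; exact htd⟩
    have hmem' : Real.cos t • x + Real.sin t • u ∈ D := hmem
    have hfinal : ‖a • x + b • y‖⁻¹ • (a • x + b • y) = Real.cos t • x + Real.sin t • u := by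
      rw [hcost, hsint, ← hN, hveq, smul_add, smul_smul, smul_smul,
        div_eq_inv_mul, div_eq_inv_mul]
    exact ⟨hne, by rw [hfinal]; exact hmem'⟩

lemma list_combo_ne_zero (D : Set E3) (hsub : D ⊆ Metric.sphere 0 1)
    (hproper : D ≠ Metric.sphere 0 1) (hconv : SConvex D) :
    ∀ (n : ℕ) (l : List (ℝ × E3)), l.length ≤ n → l ≠ [] →
      (∀ p ∈ l, 0 < p.1 ∧ p.2 ∈ D) → (l.map fun p => p.1 • p.2).sum ≠ 0 := by
  intro n
  induction n with
  | zero =>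
    intro l hl hne _
    exact absurd (List.length_eq_zero_iff.1 (Nat.le_zero.1 hl)) hne
  | succ n ih =>
    intro l hlen hne hmem
    match l with
    | [p] =>
      simp only [List.map_cons, List.map_nil, List.sum_cons, List.sum_nil, add_zero]
      obtain ⟨hp1, hp2⟩ := hmem p (by simp)
      have hnorm : ‖p.1 • p.2‖ = p.1 := by
        rw [norm_smul, mem_sphere_zero_iff_norm.1 (hsub hp2), mul_one, Real.norm_eq_abs,
          abs_of_pos hp1]
      intro h
      rw [h, norm_zero] at hnorm
      exact hp1.ne hnorm
    | p :: q :: rest =>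
      obtain ⟨hp1, hp2⟩ := hmem p (by simp)
      obtain ⟨hq1, hq2⟩ := hmem q (by simp)
      obtain ⟨hvne, hvmem⟩ := combine D hsub hproper hconv hp2 hq2 hp1 hq1
      set v := p.1 • p.2 + q.1 • q.2 with hv
      have hvn : 0 < ‖v‖ := norm_pos_iff.2 hvne
      have hlen' : ((‖v‖, ‖v‖⁻¹ • v) :: rest).length ≤ n := by
        simp only [List.length_cons] at hlen ⊢
        omega
      have hkey := ih ((‖v‖, ‖v‖⁻¹ • v) :: rest) hlen' (List.cons_ne_nil _ _) ?_
      · intro h0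
        apply hkey
        have hsum : (((‖v‖, ‖v‖⁻¹ • v) :: rest).map fun p => p.1 • p.2).sum
            = ((p :: q :: rest).map fun p => p.1 • p.2).sum := by
          simp only [List.map_cons, List.sum_cons]
          rw [smul_smul, mul_inv_cancel₀ hvn.ne', one_smul, ← add_assoc]
        rw [hsum, h0]
      · intro r hr
        rcases List.mem_cons.1 hr with hr1 | hr2
        · rw [hr1]; exact ⟨hvn, hvmem⟩
        · exact hmem r (by simp [hr2])

lemma finset_combo_ne_zero (D : Set E3) (hsub : D ⊆ Metric.sphere 0 1)
    (hproper : D ≠ Metric.sphere 0 1) (hconv : SConvex D)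
    {ι : Type*} (t : Finset ι) (w : ι → ℝ) (z : ι → E3)
    (htne : t.Nonempty) (hw : ∀ i ∈ t, 0 < w i) (hz : ∀ i ∈ t, z i ∈ D) :
    ∑ i ∈ t, w i • z i ≠ 0 := by
  have hlist := list_combo_ne_zero D hsub hproper hconv
    (t.toList.map fun i => (w i, z i)).length
    (t.toList.map fun i => (w i, z i)) le_rfl
    (by
      simp only [ne_eq, List.map_eq_nil_iff]
      intro h
      rw [Finset.toList_eq_nil] at h
      exact htne.ne_empty h)
    (by
      intro p hp
      obtain ⟨i, hi, rfl⟩ := List.mem_map.1 hp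
      rw [Finset.mem_toList] at hi
      exact ⟨hw i hi, hz i hi⟩)
  rw [List.map_map] at hlist
  have : ((fun p : ℝ × E3 => p.1 • p.2) ∘ fun i => (w i, z i)) = fun i => w i • z i := rfl
  rw [this, Finset.sum_map_toList] at hlist
  exact hlist

lemma sum_extend {ι κ : Type*} [Fintype ι] [Fintype κ] [DecidableEq κ]
    {M : Type*} [AddCommMonoid M] (e : ι ↪ κ) (f : ι → M) :
    ∑ j : κ, Function.extend e f 0 j = ∑ i : ι, f i := by
  classical
  have h1 : ∑ j ∈ Finset.univ.image e, Function.extend e f 0 j = ∑ i : ι, f i := by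
    rw [Finset.sum_image (fun i _ j _ h => e.injective h)]
    exact Finset.sum_congr rfl fun i _ => e.injective.extend_apply f 0 i
  rw [← h1]
  apply (Finset.sum_subset (Finset.subset_univ _) ?_).symm
  intro j _ hj
  rw [Function.extend_apply' _ _ _ (fun ⟨a, ha⟩ => hj (Finset.mem_image.2 ⟨a, Finset.mem_univ _, ha⟩))]
  rfl

end SphereHemi

open SphereHemi in
/-- A closed s-convex proper subset of the round 2-sphere is contained in an open hemisphere. -/
theorem stmt_2 (D : Set (EuclideanSpace ℝ (Fin 3)))
    (hsub : D ⊆ Metric.sphere 0 1)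
    (hclosed : IsClosed D)
    (hproper : D ≠ Metric.sphere 0 1)
    (hconv : SConvex D) :
    ∃ z ∈ Metric.sphere (0 : EuclideanSpace ℝ (Fin 3)) 1, ∀ x ∈ D, ⟪z, x⟫_ℝ < 0 := by
  classical
  rcases D.eq_empty_or_nonempty with hD | ⟨b₀, hb₀⟩
  · refine ⟨EuclideanSpace.single 0 1, ?_, by simp [hD]⟩
    rw [mem_sphere_zero_iff_norm, EuclideanSpace.norm_single]
    norm_num
  · have hDc : IsCompact D :=
      Metric.isCompact_of_isClosed_isBounded hclosed (Metric.isBounded_sphere.subset hsub)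
    set φ : (Fin 4 → ℝ) × (Fin 4 → EuclideanSpace ℝ (Fin 3)) → EuclideanSpace ℝ (Fin 3) :=
      fun p => ∑ j, p.1 j • p.2 j with hφdef
    have hφc : Continuous φ := by
      apply continuous_finset_sum
      intro j _
      exact ((continuous_apply j).comp continuous_fst).smul
        ((continuous_apply j).comp continuous_snd)
    have hS : IsCompact ((stdSimplex ℝ (Fin 4)) ×ˢ Set.pi Set.univ fun _ : Fin 4 => D) :=
      (isCompact_stdSimplex _ _).prod (isCompact_univ_pi fun _ => hDc)
    have hImc : IsCompact (φ '' ((stdSimplex ℝ (Fin 4)) ×ˢ Set.pi Set.univ fun _ : Fin 4 => D)) :=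
      hS.image hφc
    have hhull : convexHull ℝ D ⊆
        φ '' ((stdSimplex ℝ (Fin 4)) ×ˢ Set.pi Set.univ fun _ : Fin 4 => D) := by
      intro x hx
      obtain ⟨ι, hft, z, w, hz, hai, hw0, hw1, hsum⟩ := eq_pos_convex_span_of_mem_convexHull hx
      have hcard : Fintype.card ι ≤ 4 := by
        have h1 := hai.card_le_finrank_succ
        have h2 : Module.finrank ℝ ↥(vectorSpan ℝ (Set.range z)) ≤ 3 := by
          have := Submodule.finrank_le (vectorSpan ℝ (Set.range z))
          rwa [finrank_euclideanSpace_fin] at this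
        omega
      obtain ⟨e⟩ : Nonempty (ι ↪ Fin 4) :=
        Function.Embedding.nonempty_of_card_le (by simpa using hcard)
      refine ⟨(Function.extend e w 0, Function.extend e z fun _ => b₀), ⟨⟨?_, ?_⟩, ?_⟩, ?_⟩
      · intro j
        dsimp only
        rcases em (∃ i, e i = j) with ⟨i, rfl⟩ | hj
        · rw [e.injective.extend_apply]; exact (hw0 i).le
        · rw [Function.extend_apply' _ _ _ hj]; exact le_refl _
      · dsimp only
        rw [sum_extend]; exact hw1
      · intro j _
        dsimp only
        rcases em (∃ i, e i = j) with ⟨i, rfl⟩ | hj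
        · rw [e.injective.extend_apply]; exact hz (Set.mem_range_self i)
        · rw [Function.extend_apply' _ _ _ hj]; exact hb₀
      · show ∑ j, Function.extend e w 0 j • Function.extend e z (fun _ => b₀) j = x
        rw [← hsum]
        have hptwise : ∀ j, Function.extend e w 0 j • Function.extend e z (fun _ => b₀) j
            = Function.extend e (fun i => w i • z i) 0 j := by
          intro j
          rcases em (∃ i, e i = j) with ⟨i, rfl⟩ | hj
          · rw [e.injective.extend_apply, e.injective.extend_apply, e.injective.extend_apply]
          · rw [Function.extend_apply' _ _ _ hj, Function.extend_apply' _ _ _ hj,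
              Function.extend_apply' _ _ _ hj]
            simp
        rw [Finset.sum_congr rfl fun j _ => hptwise j]
        exact sum_extend e _
    have h0Im : (0 : EuclideanSpace ℝ (Fin 3)) ∉
        φ '' ((stdSimplex ℝ (Fin 4)) ×ˢ Set.pi Set.univ fun _ : Fin 4 => D) := by
      rintro ⟨⟨w, z⟩, ⟨⟨hw0, hw1⟩, hzD⟩, hφ0⟩
      simp only [hφdef] at hφ0
      dsimp only at hw0 hw1 hzD hφ0
      set t := Finset.univ.filter fun j => 0 < w j with htdef
      have htne : t.Nonempty := by
        obtain ⟨j, hj, hwj⟩ := Finset.exists_ne_zero_of_sum_ne_zero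
          (f := w) (s := Finset.univ) (by rw [hw1]; norm_num)
        exact ⟨j, Finset.mem_filter.2 ⟨hj, (hw0 j).lt_of_ne (Ne.symm hwj)⟩⟩
      apply finset_combo_ne_zero D hsub hproper hconv t w z htne
        (fun i hi => (Finset.mem_filter.1 hi).2) (fun i _ => hzD i trivial)
      rw [htdef, Finset.sum_filter_of_ne
        (fun i _ hne => lt_of_le_of_ne (hw0 i) fun h => hne (by rw [← h, zero_smul]))]
      exact hφ0
    have h0cl : (0 : EuclideanSpace ℝ (Fin 3)) ∉ closure (convexHull ℝ D) :=
      fun h => h0Im (closure_minimal hhull hImc.isClosed h)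
    obtain ⟨f, u, hfu, hfb⟩ := geometric_hahn_banach_point_closed
      ((convex_convexHull ℝ D).closure) isClosed_closure h0cl
    have hu0 : 0 < u := by simpa using hfu
    set v := (InnerProductSpace.toDual ℝ (EuclideanSpace ℝ (Fin 3))).symm f with hv
    have hvD : ∀ x ∈ D, u < ⟪v, x⟫_ℝ := by
      intro x hx
      rw [hv, InnerProductSpace.toDual_symm_apply]
      exact hfb x (subset_closure (subset_convexHull ℝ D hx))
    have hvne : v ≠ 0 := by
      intro h
      have := hvD b₀ hb₀
      rw [h, inner_zero_left] at this
      linarith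
    have hvn : 0 < ‖v‖ := norm_pos_iff.2 hvne
    refine ⟨-(‖v‖⁻¹ • v), ?_, ?_⟩
    · rw [mem_sphere_zero_iff_norm, norm_neg, norm_smul, norm_inv, norm_norm,
        inv_mul_cancel₀ hvn.ne']
    · intro x hx
      have h1 := hvD x hx
      rw [inner_neg_left, real_inner_smul_left]
      have h2 : 0 < ‖v‖⁻¹ * ⟪v, x⟫_ℝ := mul_pos (inv_pos.2 hvn) (lt_trans hu0 h1)
      linarith
end

section
/- The closure of an open, w-convex, proper subset of the round 2-sphere S² is again a proper subset of S². Equivalently: if C is an open, w-convex subset of S² whose closure is all of S², then C = S². -/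
lemma mid_eq {q r m : EuclideanSpace ℝ (Fin 3)} {c : ℝ}
    (hq : ‖q‖ = 1) (hr : ‖r‖ = 1) (hm : ‖m‖ = 1) (hc : 0 < c)
    (h1 : ⟪q, m⟫_ℝ = c) (h2 : ⟪m, r⟫_ℝ = c) (h3 : ⟪q, r⟫_ℝ = 2*c^2 - 1) :
    m = (2*c)⁻¹ • (q + r) := by
  have e1 : ⟪m, (2*c)⁻¹ • (q + r)⟫_ℝ = 1 := by
    rw [real_inner_smul_right, inner_add_right, real_inner_comm q m, h1, h2]
    field_simp; ring
  have e2 : ‖(2*c)⁻¹ • (q + r)‖^2 = 1 := by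
    rw [norm_smul, mul_pow, norm_add_sq_real q r, h3, hq, hr, Real.norm_eq_abs, sq_abs]
    field_simp; ring
  have key : ‖m - (2*c)⁻¹ • (q + r)‖^2 = 0 := by
    rw [norm_sub_sq_real m _, e1, e2, hm]; ring
  have h0 : m - (2*c)⁻¹ • (q + r) = 0 := by
    have := pow_eq_zero_iff (n := 2) (by norm_num) |>.mp key
    exact norm_eq_zero.mp this
  exact sub_eq_zero.mp h0

/-- The closure of an open w-convex proper subset of the round 2-sphere is again a proper
subset of the sphere.  (Since the sphere is closed in the ambient Euclidean space, the closure
of `C ⊆ S²` in the subspace topology coincides with its ambient closure.) -/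
theorem stmt_3 (C : Set (EuclideanSpace ℝ (Fin 3)))
    (hsub : C ⊆ Metric.sphere 0 1)
    (hopen : IsOpen ((↑) ⁻¹' C : Set (Metric.sphere (0 : EuclideanSpace ℝ (Fin 3)) 1)))
    (hconv : WConvex C)
    (hproper : C ≠ Metric.sphere 0 1) :
    closure C ≠ Metric.sphere (0 : EuclideanSpace ℝ (Fin 3)) 1 := by
  intro hcl
  -- a point outside C
  obtain ⟨p, hpS, hpC⟩ : ∃ p, p ∈ Metric.sphere (0 : EuclideanSpace ℝ (Fin 3)) 1 ∧ p ∉ C := by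
    by_contra h; push_neg at h
    exact hproper (hsub.antisymm fun x hx => h x hx)
  have hp1 : ‖p‖ = 1 := mem_sphere_zero_iff_norm.mp hpS
  have hpp : ⟪p, p⟫_ℝ = 1 := by rw [real_inner_self_eq_norm_sq p, hp1]; norm_num
  -- the point reflection through p
  set R : EuclideanSpace ℝ (Fin 3) → EuclideanSpace ℝ (Fin 3) :=
    fun x => (2*⟪x, p⟫_ℝ) • p - x with hR
  have hRcont : Continuous R := by
    rw [hR]; fun_prop
  have hRnorm : ∀ z, ‖R z‖ = ‖z‖ := by
    intro z
    have hsq : ‖R z‖^2 = ‖z‖^2 := by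
      rw [hR]
      simp only
      rw [norm_sub_sq_real, norm_smul, real_inner_smul_left, mul_pow, Real.norm_eq_abs, sq_abs,
        hp1, real_inner_comm p z]
      ring
    calc ‖R z‖ = Real.sqrt (‖R z‖^2) := (Real.sqrt_sq (norm_nonneg _)).symm
      _ = Real.sqrt (‖z‖^2) := by rw [hsq]
      _ = ‖z‖ := Real.sqrt_sq (norm_nonneg _)
  have hRlin : ∀ x y, R x - R y = R (x - y) := by
    intro x y
    simp only [hR, inner_sub_left]
    module
  have hRR : ∀ x, R (R x) = x := by
    intro x
    simp only [hR, inner_sub_left, real_inner_smul_left, hpp]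
    module
  -- open set description of C
  obtain ⟨U, hUopen, hU⟩ := isOpen_induced_iff.mp hopen
  have hUC : U ∩ Metric.sphere 0 1 = C := by
    ext x
    constructor
    · rintro ⟨hxU, hxS⟩
      have : (⟨x, hxS⟩ : Metric.sphere (0 : EuclideanSpace ℝ (Fin 3)) 1) ∈ (↑) ⁻¹' U := hxU
      rw [hU] at this
      exact this
    · intro hxC
      have hxS := hsub hxC
      refine ⟨?_, hxS⟩
      have : (⟨x, hxS⟩ : Metric.sphere (0 : EuclideanSpace ℝ (Fin 3)) 1) ∈ (↑) ⁻¹' C := hxC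
      rw [← hU] at this
      exact this
  -- density
  have hden : ∀ x ∈ Metric.sphere (0 : EuclideanSpace ℝ (Fin 3)) 1,
      ∀ V : Set (EuclideanSpace ℝ (Fin 3)), IsOpen V → x ∈ V → ∃ y ∈ C, y ∈ V := by
    intro x hx V hV hxV
    have : x ∈ closure C := hcl ▸ hx
    obtain ⟨y, hyV, hyC⟩ := _root_.mem_closure_iff.mp this V hV hxV
    exact ⟨y, hyC, hyV⟩
  -- q₀ ∈ C near p
  obtain ⟨q₀, hq₀C, hq₀b⟩ := hden p hpS (Metric.ball p (1/4)) Metric.isOpen_ball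
    (Metric.mem_ball_self (by norm_num))
  have hq₀1 : ‖q₀‖ = 1 := mem_sphere_zero_iff_norm.mp (hsub hq₀C)
  have hq₀p : ‖q₀ - p‖ < 1/4 := by
    have := Metric.mem_ball.mp hq₀b; rwa [dist_eq_norm] at this
  -- R q₀ ∈ sphere, near p, and in R⁻¹ U
  have hRq₀S : R q₀ ∈ Metric.sphere (0 : EuclideanSpace ℝ (Fin 3)) 1 :=
    mem_sphere_zero_iff_norm.mpr (by rw [hRnorm, hq₀1])
  have hRpp : R p = p := by
    simp only [hR, hpp]
    module
  have hRq₀p : ‖R q₀ - p‖ < 1/4 := by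
    calc ‖R q₀ - p‖ = ‖R q₀ - R p‖ := by rw [hRpp]
      _ = ‖R (q₀ - p)‖ := by rw [hRlin]
      _ = ‖q₀ - p‖ := hRnorm _
      _ < 1/4 := hq₀p
  -- find q ∈ C with R q ∈ C near p
  have hVopen : IsOpen (R ⁻¹' U ∩ Metric.ball p (1/2)) :=
    (hUopen.preimage hRcont).inter Metric.isOpen_ball
  have hRq₀V : R q₀ ∈ R ⁻¹' U ∩ Metric.ball p (1/2) := by
    constructor
    · show R (R q₀) ∈ U
      rw [hRR]
      exact ((hUC ▸ hq₀C : q₀ ∈ U ∩ _)).1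
    · rw [Metric.mem_ball, dist_eq_norm]
      linarith
  obtain ⟨q, hqC, hqU, hqb⟩ := hden (R q₀) hRq₀S _ hVopen hRq₀V
  have hq1 : ‖q‖ = 1 := mem_sphere_zero_iff_norm.mp (hsub hqC)
  have hqp : ‖q - p‖ < 1/2 := by
    have := Metric.mem_ball.mp hqb; rwa [dist_eq_norm] at this
  set c : ℝ := ⟪q, p⟫_ℝ with hcdef
  have hcpos : (0:ℝ) < c := by
    have h2 : ‖q - p‖^2 < (1/2)^2 := by
      have := norm_nonneg (q - p)
      nlinarith
    rw [norm_sub_sq_real q p, hq1, hp1] at h2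
    simp only [← hcdef] at h2
    nlinarith
  -- r := R q ∈ C
  have hrC : R q ∈ C := by
    rw [← hUC]
    exact ⟨hqU, mem_sphere_zero_iff_norm.mpr (by rw [hRnorm, hq1])⟩
  set r : EuclideanSpace ℝ (Fin 3) := R q with hrdef
  have hr1 : ‖r‖ = 1 := mem_sphere_zero_iff_norm.mp (hsub hrC)
  have hreq : r = (2*c) • p - q := rfl
  have hqq : ⟪q, q⟫_ℝ = 1 := by rw [real_inner_self_eq_norm_sq q, hq1]; norm_num
  have hqr : ⟪q, r⟫_ℝ = 2*c^2 - 1 := by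
    rw [hreq, inner_sub_right, real_inner_smul_right, hqq, ← hcdef]
    ring
  have hpr : ⟪p, r⟫_ℝ = c := by
    rw [hreq, inner_sub_right, real_inner_smul_right, hpp, real_inner_comm q p, ← hcdef]
    ring
  -- the geodesic
  obtain ⟨γ, ⟨hγS, hγ0, hγd, hγdist⟩, hγC⟩ := hconv q hqC r hrC
  set d : ℝ := sphDist q r with hddef
  have hd0 : 0 ≤ d := Real.arccos_nonneg _
  have hdpi : d ≤ Real.pi := Real.arccos_le_pi _
  have hhalf : d/2 ∈ Set.Icc (0:ℝ) d := ⟨by linarith, by linarith⟩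
  have h0mem : (0:ℝ) ∈ Set.Icc (0:ℝ) d := ⟨le_refl _, hd0⟩
  have hdmem : d ∈ Set.Icc (0:ℝ) d := ⟨hd0, le_refl _⟩
  set m : EuclideanSpace ℝ (Fin 3) := γ (d/2) with hmdef
  have hmC : m ∈ C := hγC _ hhalf
  have hm1 : ‖m‖ = 1 := mem_sphere_zero_iff_norm.mp (hγS _ hhalf)
  -- inner product bounds
  have hbound : ∀ x y : EuclideanSpace ℝ (Fin 3), ‖x‖ = 1 → ‖y‖ = 1 →
      -1 ≤ ⟪x, y⟫_ℝ ∧ ⟪x, y⟫_ℝ ≤ 1 := by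
    intro x y hx hy
    have := abs_real_inner_le_norm x y
    rw [hx, hy] at this
    constructor <;> [linarith [neg_abs_le (⟪x, y⟫_ℝ)]; linarith [le_abs_self (⟪x, y⟫_ℝ)]]
  -- cos d = ⟪q,r⟫
  have hcosd : Real.cos d = ⟪q, r⟫_ℝ := by
    rw [hddef, sphDist, Real.cos_arccos (hbound q r hq1 hr1).1 (hbound q r hq1 hr1).2]
  -- cos(d/2) = c
  have hcoshalf_nonneg : 0 ≤ Real.cos (d/2) :=
    Real.cos_nonneg_of_mem_Icc ⟨by linarith [Real.pi_pos], by linarith⟩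
  have hcoshalf : Real.cos (d/2) = c := by
    have hsq : Real.cos (d/2)^2 = c^2 := by
      have h := Real.cos_sq (d/2)
      rw [show 2*(d/2) = d by ring, hcosd, hqr] at h
      rw [h]; ring
    calc Real.cos (d/2) = Real.sqrt (Real.cos (d/2)^2) :=
          (Real.sqrt_sq hcoshalf_nonneg).symm
      _ = Real.sqrt (c^2) := by rw [hsq]
      _ = c := Real.sqrt_sq hcpos.le
  -- ⟪q,m⟫ = c
  have hqm : ⟪q, m⟫_ℝ = c := by
    have h := hγdist 0 h0mem (d/2) hhalf
    rw [hγ0] at h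
    have habs : |(0:ℝ) - d/2| = d/2 := by rw [abs_sub_comm]; simp [abs_of_nonneg, hd0]; linarith
    rw [habs] at h
    have := (hbound q m hq1 hm1)
    calc ⟪q, m⟫_ℝ = Real.cos (Real.arccos ⟪q, m⟫_ℝ) := (Real.cos_arccos this.1 this.2).symm
      _ = Real.cos (sphDist q m) := rfl
      _ = Real.cos (d/2) := by rw [← h]
      _ = c := hcoshalf
  -- ⟪m,r⟫ = c
  have hmr : ⟪m, r⟫_ℝ = c := by
    have h := hγdist (d/2) hhalf d hdmem
    rw [hγd] at h
    have habs : |d/2 - d| = d/2 := by rw [abs_sub_comm]; rw [abs_of_nonneg (by linarith)]; ring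
    rw [habs] at h
    have := (hbound m r hm1 hr1)
    calc ⟪m, r⟫_ℝ = Real.cos (Real.arccos ⟪m, r⟫_ℝ) := (Real.cos_arccos this.1 this.2).symm
      _ = Real.cos (sphDist m r) := rfl
      _ = Real.cos (d/2) := by rw [← h]
      _ = c := hcoshalf
  -- conclude m = p
  have hm_eq : m = (2*c)⁻¹ • (q + r) := mid_eq hq1 hr1 hm1 hcpos hqm hmr hqr
  have hp_eq : p = (2*c)⁻¹ • (q + r) := mid_eq hq1 hr1 hp1 hcpos hcdef.symm hpr hqr
  exact hpC ((hm_eq.trans hp_eq.symm) ▸ hmC)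
end
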